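/- For r ≥ 3, if G is a K_{1,r}-free graph and B is a set of vertices inducing a bipartite subgraph of G, then |B| ≤ 2(r-1)·γ(G). -/

import Mathlib

open Finset

variable {V : Type*}

/-- A finset is independent in `G` : no two of its vertices are adjacent. -/
def IsIndepFinset (G : SimpleGraph V) (S : Finset V) : Prop :=
  ∀ u ∈ S, ∀ v ∈ S, ¬ G.Adj u v

/-- A finset dominates `G` : every vertex outside it has a neighbour inside it. -/
def IsDomFinset (G : SimpleGraph V) (D : Finset V) : Prop :=
  ∀ v, v ∉ D → ∃ u ∈ D, G.Adj u v

/-- The independence number of `G`. -/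
noncomputable def indepNum [Fintype V] (G : SimpleGraph V) : ℕ :=
  sSup {n | ∃ S : Finset V, IsIndepFinset G S ∧ S.card = n}

/-- The domination number of `G`. -/
noncomputable def domNum [Fintype V] (G : SimpleGraph V) : ℕ :=
  sInf {n | ∃ D : Finset V, IsDomFinset G D ∧ D.card = n}

/-- `G` is `K_{1,r}`-free: no vertex has `r` pairwise nonadjacent neighbours. -/
def K1rFree (G : SimpleGraph V) (r : ℕ) : Prop :=
  ¬ ∃ (v : V) (A : Finset V), (∀ a ∈ A, G.Adj v a) ∧
      (∀ a ∈ A, ∀ b ∈ A, a ≠ b → ¬ G.Adj a b) ∧ A.card = r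

/-- For r ≥ 3, in a K_{1,r}-free graph any vertex set inducing a bipartite
subgraph has size at most 2(r-1)·γ(G). -/
theorem stmt3 [Fintype V] [DecidableEq V] (G : SimpleGraph V) (r : ℕ) (hr : 3 ≤ r)
    (hG : K1rFree G r) (B B₁ B₂ : Finset V)
    (hpart : B₁ ∪ B₂ = B) (hdisj : Disjoint B₁ B₂)
    (h1 : IsIndepFinset G B₁) (h2 : IsIndepFinset G B₂) :
    B.card ≤ 2 * (r - 1) * domNum G := by
  classical
  -- a dominating set realizing domNum
  have hne : (Finset.univ : Finset V).card ∈
      {n | ∃ D : Finset V, IsDomFinset G D ∧ D.card = n} := by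
    exact ⟨Finset.univ, fun v hv => absurd (Finset.mem_univ v) hv, rfl⟩
  obtain ⟨D, hD, hDcard⟩ := Nat.sInf_mem ⟨_, hne⟩
  -- key claim: a set of independent common neighbours of d has size ≤ r-1
  have key : ∀ (d : V) (S : Finset V), (∀ a ∈ S, G.Adj d a) →
      (∀ a ∈ S, ∀ b ∈ S, ¬ G.Adj a b) → S.card ≤ r - 1 := by
    intro d S hadj hind
    by_contra h
    have hle : r ≤ S.card := by omega
    obtain ⟨T, hTS, hTcard⟩ := Finset.exists_subset_card_eq hle
    exact hG ⟨d, T, fun a ha => hadj a (hTS ha),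
      fun a ha b hb _ => hind a (hTS ha) b (hTS hb), hTcard⟩
  set f : V → Finset V := fun d => B.filter (fun b => G.Adj d b ∨ b = d) with hf
  -- B is covered by the f d, d ∈ D
  have hcov : B ⊆ D.biUnion f := by
    intro b hb
    rw [Finset.mem_biUnion]
    by_cases hbD : b ∈ D
    · exact ⟨b, hbD, by simp [hf, hb]⟩
    · obtain ⟨u, huD, hadj⟩ := hD b hbD
      exact ⟨u, huD, by simp [hf, hb, hadj]⟩
  -- each f d has size ≤ 2(r-1)
  have hbound : ∀ d ∈ D, (f d).card ≤ 2 * (r - 1) := by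
    intro d _
    have hsub : f d ⊆ B₁.filter (G.Adj d) ∪ B₂.filter (G.Adj d) ∪ (B ∩ {d}) := by
      intro b hb
      simp only [hf, Finset.mem_filter] at hb
      obtain ⟨hbB, hadj | heq⟩ := hb
      · rw [← hpart, Finset.mem_union] at hbB
        rcases hbB with h | h <;>
          simp [Finset.mem_union, Finset.mem_filter, h, hadj]
      · subst heq
        simp [Finset.mem_union, hbB]
    have h3 : (f d).card ≤ (B₁.filter (G.Adj d)).card + (B₂.filter (G.Adj d)).card
        + (B ∩ {d}).card := by
      calc (f d).card ≤ _ := Finset.card_le_card hsub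
        _ ≤ _ := Finset.card_union_le _ _
        _ ≤ _ := by
            exact Nat.add_le_add_right (Finset.card_union_le _ _) _
    have hc1 : (B₁.filter (G.Adj d)).card ≤ r - 1 :=
      key d _ (fun a ha => (Finset.mem_filter.mp ha).2)
        (fun a ha b hb => h1 a (Finset.mem_filter.mp ha).1 b (Finset.mem_filter.mp hb).1)
    have hc2 : (B₂.filter (G.Adj d)).card ≤ r - 1 :=
      key d _ (fun a ha => (Finset.mem_filter.mp ha).2)
        (fun a ha b hb => h2 a (Finset.mem_filter.mp ha).1 b (Finset.mem_filter.mp hb).1)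
    have hc3 : (B ∩ {d}).card ≤ 1 :=
      le_trans (Finset.card_le_card (Finset.inter_subset_right)) (by simp)
    by_cases hdB : d ∈ B
    · rw [← hpart, Finset.mem_union] at hdB
      rcases hdB with hd1 | hd2
      · have : (B₁.filter (G.Adj d)).card = 0 := by
          rw [Finset.card_eq_zero, Finset.filter_eq_empty_iff]
          intro a ha
          exact h1 d hd1 a ha
        omega
      · have : (B₂.filter (G.Adj d)).card = 0 := by
          rw [Finset.card_eq_zero, Finset.filter_eq_empty_iff]
          intro a ha
          exact h2 d hd2 a ha
        omega
    · have : (B ∩ {d}).card = 0 := by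
        rw [Finset.card_eq_zero]
        ext x
        simp only [Finset.mem_inter, Finset.mem_singleton, Finset.notMem_empty, iff_false]
        rintro ⟨hx, rfl⟩
        exact hdB hx
      omega
  calc B.card ≤ (D.biUnion f).card := Finset.card_le_card hcov
    _ ≤ ∑ d ∈ D, (f d).card := Finset.card_biUnion_le
    _ ≤ ∑ _d ∈ D, 2 * (r - 1) := Finset.sum_le_sum hbound
    _ = D.card * (2 * (r - 1)) := by rw [Finset.sum_const, smul_eq_mul]
    _ = 2 * (r - 1) * domNum G := by rw [hDcard, domNum]; ring
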